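/- arXiv:1808.05555 — 3 statements merged into one kernel-verified Lean document; each statement's English description precedes it below -/
import Mathlib

section
/- Let A be an n×n diagonalizable matrix, A = V D V⁻¹ with D diagonal, eigenvalues λ_1,…,λ_n, and let δ = (1/2)·min{|λ_i − λ_j| : λ_i ≠ λ_j} (δ = +∞ if A has a single eigenvalue). If N is an n×n matrix with ‖N‖ < δ/κ₂(V), then the optimal matching distance between the spectra of A and A+N satisfies d(A, A+N) ≤ κ₂(V)·‖N‖. -/
open Filter MeasureTheory
open scoped Matrix
open Asymptotics
open scoped BigOperators

/-- The eigenvalues of a complex matrix, listed with multiplicity (in some fixed order). -/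
noncomputable def eigs {n : ℕ} (A : Matrix (Fin n) (Fin n) ℂ) : Fin n → ℂ :=
  fun i => (Matrix.charpoly A).roots.toList.getD i 0

/-- Optimal matching distance between two `n`-tuples of complex numbers. -/
noncomputable def matchDist {n : ℕ} (v w : Fin n → ℂ) : ℝ :=
  ⨅ σ : Equiv.Perm (Fin n), ⨆ i, ‖v i - w (σ i)‖

/-- Spectral norm (largest singular value) of a matrix. -/
noncomputable def specNorm {n : ℕ} (A : Matrix (Fin n) (Fin n) ℂ) : ℝ :=
  ‖Matrix.toEuclideanCLM (𝕜 := ℂ) A‖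

/-- Singular values of a matrix: square roots of eigenvalues of `Aᴴ * A`. -/
noncomputable def singVals {n : ℕ} (A : Matrix (Fin n) (Fin n) ℂ) : Fin n → ℝ :=
  fun i => Real.sqrt ((Matrix.isHermitian_conjTranspose_mul_self A).eigenvalues i)

/-- Trace (Schatten-1) norm. -/
noncomputable def traceNorm {n : ℕ} (A : Matrix (Fin n) (Fin n) ℂ) : ℝ :=
  ∑ i, singVals A i

/-- Schatten `p`-norm. -/
noncomputable def schattenNorm (p : ℝ) {n : ℕ} (A : Matrix (Fin n) (Fin n) ℂ) : ℝ :=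
  (∑ i, singVals A i ^ p) ^ (1 / p)

/-- Rearrangement of a real tuple in non-increasing order. -/
noncomputable def descSort {n : ℕ} (v : Fin n → ℝ) : Fin n → ℝ :=
  fun i => (v ∘ Tuple.sort v) i.rev

/-- The function `p(A) = min_{i=1..n+1} ((i-1)/n + σ_i(A))`, `σ_{n+1} = 0`. -/
noncomputable def pfun {n : ℕ} (A : Matrix (Fin n) (Fin n) ℂ) : ℝ :=
  ⨅ i : Fin (n + 1),
    ((i : ℝ) / n + if h : (i : ℕ) < n then descSort (singVals A) ⟨i, h⟩ else 0)

/-- Generalized optimal matching distance between two `n`-tuples. -/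
noncomputable def gMatchDist {n : ℕ} (v w : Fin n → ℂ) : ℝ :=
  ⨅ σ : Equiv.Perm (Fin n), ⨅ i : Fin n,
    ((i : ℝ) / n + descSort (fun j => ‖v j - w (σ j)‖) i)

/-- A matrix-sequence. -/
abbrev MatSeq := (n : ℕ) → Matrix (Fin n) (Fin n) ℂ

/-- `f : D → ℂ` is a spectral symbol (in the Weyl sense) of the matrix-sequence `A`. -/
def SymbolOf {q : ℕ} (A : MatSeq) (D : Set (Fin q → ℝ)) (f : (Fin q → ℝ) → ℂ) : Prop :=
  MeasurableSet D ∧ volume D ≠ 0 ∧ volume D ≠ ⊤ ∧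
  ∀ F : ℂ → ℂ, Continuous F → HasCompactSupport F →
    Tendsto (fun n : ℕ => (n : ℂ)⁻¹ * ∑ i, F (eigs (A n) i)) atTop
      (nhds (((volume D).toReal)⁻¹ • ∫ x in D, F (f x)))

/-- Asymptotic optimal matching pseudodistance between matrix-sequences. -/
noncomputable def dSeq (A B : MatSeq) : ℝ :=
  Filter.atTop.limsup fun n => matchDist (eigs (A n)) (eigs (B n))

/-- Asymptotic generalized optimal matching pseudodistance. -/
noncomputable def dSeq' (A B : MatSeq) : ℝ :=
  Filter.atTop.limsup fun n => gMatchDist (eigs (A n)) (eigs (B n))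

/-- Hermitian (real) part of a matrix. -/
noncomputable def reM {n : ℕ} (M : Matrix (Fin n) (Fin n) ℂ) : Matrix (Fin n) (Fin n) ℂ :=
  (2 : ℂ)⁻¹ • (M + Mᴴ)

/-- Skew part of a matrix, `(M - Mᴴ)/(2i)`. -/
noncomputable def imM {n : ℕ} (M : Matrix (Fin n) (Fin n) ℂ) : Matrix (Fin n) (Fin n) ℂ :=
  (2 * Complex.I)⁻¹ • (M - Mᴴ)

/-- The acs pseudodistance. -/
noncomputable def dacs (A B : MatSeq) : ℝ := Filter.atTop.limsup fun n => pfun (A n - B n)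

/-- `p_N(A) = limsup ‖A_n‖₁ / n`. -/
noncomputable def pN (A : MatSeq) : ℝ := Filter.atTop.limsup fun n => traceNorm (A n) / n

/-- The pseudodistance `d_H`. -/
noncomputable def dH (A B : MatSeq) : ℝ :=
  dacs (fun n => reM (A n)) (fun n => reM (B n)) +
    pN (fun n => imM (A n)) + pN (fun n => imM (B n))
open Polynomial

lemma specNorm_nonneg {n : ℕ} (A : Matrix (Fin n) (Fin n) ℂ) : 0 ≤ specNorm A :=
  norm_nonneg _

/-- Operator norm bound on `mulVec` through Euclidean vectors. -/
lemma mulVec_norm_le {n : ℕ} (M : Matrix (Fin n) (Fin n) ℂ) (y : Fin n → ℂ) :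
    ‖(WithLp.equiv 2 (Fin n → ℂ)).symm (M.mulVec y)‖ ≤
      specNorm M * ‖(WithLp.equiv 2 (Fin n → ℂ)).symm y‖ := by
  have h : Matrix.toEuclideanCLM (𝕜 := ℂ) M ((WithLp.equiv 2 (Fin n → ℂ)).symm y)
      = (WithLp.equiv 2 (Fin n → ℂ)).symm (M.mulVec y) := rfl
  rw [← h]
  exact (Matrix.toEuclideanCLM (𝕜 := ℂ) M).le_opNorm _

/-- `eval` of charpoly as a determinant. -/
lemma eval_charpoly {n : ℕ} (M : Matrix (Fin n) (Fin n) ℂ) (z : ℂ) :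
    (Matrix.charpoly M).eval z = (Matrix.diagonal (fun _ => z) - M).det := by
  have h0 : (Matrix.charpoly M).eval z
      = ((Polynomial.evalRingHom z).mapMatrix (Matrix.charmatrix M)).det :=
    RingHom.map_det (Polynomial.evalRingHom z) (Matrix.charmatrix M)
  rw [Matrix.charpoly] at h0 ⊢
  rw [h0, RingHom.mapMatrix_apply]
  congr 1
  ext i j
  by_cases h : i = j
  · subst h
    simp [Matrix.charmatrix_apply_eq]
  · simp [Matrix.charmatrix_apply_ne _ _ _ h, Matrix.diagonal_apply_ne _ h,
      Matrix.sub_apply]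

set_option maxHeartbeats 1000000 in
set_option synthInstance.maxHeartbeats 400000 in
/-- Bauer–Fike. -/
lemma bauer_fike {n : ℕ} (V W N : Matrix (Fin n) (Fin n) ℂ) (d : Fin n → ℂ)
    (hVW : V * W = 1) (hWV : W * V = 1) (c : ℂ) (hc : ‖c‖ ≤ 1)
    (μ : ℂ) (hμ : μ ∈ (Matrix.charpoly (V * Matrix.diagonal d * W + c • N)).roots) :
    ∃ i, ‖μ - d i‖ ≤ specNorm V * specNorm W * specNorm N := by
  classical
  set M := V * Matrix.diagonal d * W + c • N with hM
  have hn : 0 < n := by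
    rcases Nat.eq_zero_or_pos n with h | h
    · exfalso
      subst h
      have : (Matrix.charpoly M).natDegree = 0 := by
        have := Matrix.charpoly_natDegree_eq_dim M
        simpa using this
      have hcard := Polynomial.card_roots' (Matrix.charpoly M)
      rw [this] at hcard
      have : (Matrix.charpoly M).roots = 0 := by
        simpa [Multiset.card_eq_zero] using Nat.le_zero.mp hcard
      rw [this] at hμ
      exact absurd hμ (Multiset.notMem_zero _)
    · exact h
  have hroot : (Matrix.charpoly M).IsRoot μ := (Polynomial.mem_roots
    (Matrix.charpoly_monic M).ne_zero).mp hμ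
  have hdet : (Matrix.diagonal (fun _ => μ) - M).det = 0 := by
    rw [← eval_charpoly]; exact hroot
  obtain ⟨x, hx0, hx⟩ := (Matrix.exists_mulVec_eq_zero_iff).mpr hdet
  set y := W.mulVec x with hy
  have hxy : V.mulVec y = x := by
    rw [hy, Matrix.mulVec_mulVec, hVW, Matrix.one_mulVec]
  have hy0 : y ≠ 0 := by
    intro h
    apply hx0
    rw [← hxy, h, Matrix.mulVec_zero]
  -- key identity
  have key : ∀ i, (μ - d i) * y i = ((c • (W * N * V)).mulVec y) i := by
    have h1 : (W * (Matrix.diagonal (fun _ => μ) - M) * V).mulVec y = 0 := by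
      have hz : ((Matrix.diagonal fun _ => μ) - M) *ᵥ (V *ᵥ y) = 0 := by rw [hxy, hx]
      rw [← Matrix.mulVec_mulVec, ← Matrix.mulVec_mulVec, hz, Matrix.mulVec_zero]
    have h2 : W * (Matrix.diagonal (fun _ => μ) - M) * V
        = Matrix.diagonal (fun i => μ - d i) - c • (W * N * V) := by
      have hdiag : Matrix.diagonal (fun _ : Fin n => μ) = (μ : ℂ) • (1 : Matrix (Fin n) (Fin n) ℂ) := by
        rw [Matrix.smul_one_eq_diagonal]
      rw [hM]
      rw [Matrix.mul_sub, Matrix.sub_mul]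
      have e1 : W * Matrix.diagonal (fun _ : Fin n => μ) * V = Matrix.diagonal (fun _ : Fin n => μ) := by
        rw [hdiag, Matrix.mul_smul, Matrix.mul_one, Matrix.smul_mul, hWV]
      have e2 : W * (V * Matrix.diagonal d * W + c • N) * V
          = Matrix.diagonal d + c • (W * N * V) := by
        have ha : W * (V * Matrix.diagonal d * W) * V
            = (W * V) * Matrix.diagonal d * (W * V) := by noncomm_ring
        have hb : W * (c • N) * V = c • (W * N * V) := by
          rw [Matrix.mul_smul, Matrix.smul_mul, Matrix.mul_assoc]
        rw [Matrix.mul_add, Matrix.add_mul, ha, hb, hWV, Matrix.one_mul, Matrix.mul_one]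
      rw [e1, e2, ← Matrix.diagonal_sub]
      abel
    rw [h2] at h1
    intro i
    have := congrFun h1 i
    rw [Matrix.sub_mulVec] at this
    have h3 : (Matrix.diagonal (fun i => μ - d i)).mulVec y i = (μ - d i) * y i := by
      rw [Matrix.mulVec_diagonal]
    have h4 := sub_eq_zero.mp (by simpa using this)
    rw [← h3, h4]
  have hnp : Nonempty (Fin n) := ⟨⟨0, hn⟩⟩
  have hne : (Finset.univ : Finset (Fin n)).Nonempty := Finset.univ_nonempty
  set K := c • (W * N * V) with hK
  set z := K.mulVec y with hzdef
  set m := Finset.univ.inf' hne (fun i => ‖μ - d i‖) with hm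
  have hm0 : 0 ≤ m := Finset.le_inf' hne _ (fun i _ => norm_nonneg _)
  have hmy : ∀ i, m * ‖y i‖ ≤ ‖z i‖ := by
    intro i
    rw [← key i, norm_mul]
    exact mul_le_mul_of_nonneg_right (Finset.inf'_le _ (Finset.mem_univ i))
      (norm_nonneg _)
  set Y := (WithLp.equiv 2 (Fin n → ℂ)).symm y with hY
  set Z := (WithLp.equiv 2 (Fin n → ℂ)).symm z with hZ
  have hYn : ‖Y‖ = Real.sqrt (∑ i, ‖y i‖ ^ 2) := by
    rw [EuclideanSpace.norm_eq]
    congr 1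
  have hZn : ‖Z‖ = Real.sqrt (∑ i, ‖z i‖ ^ 2) := by
    rw [EuclideanSpace.norm_eq]
    congr 1
  have h5 : m * ‖Y‖ ≤ ‖Z‖ := by
    rw [hYn, hZn]
    have : m * Real.sqrt (∑ i, ‖y i‖ ^ 2)
        = Real.sqrt (∑ i, (m * ‖y i‖) ^ 2) := by
      rw [← Real.sqrt_sq hm0, ← Real.sqrt_mul (sq_nonneg m), Finset.mul_sum]
      congr 1
      apply Finset.sum_congr rfl
      intro i _
      rw [mul_pow, Real.sq_sqrt (sq_nonneg m)]
    rw [this]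
    apply Real.sqrt_le_sqrt
    apply Finset.sum_le_sum
    intro i _
    exact pow_le_pow_left₀ (by positivity) (hmy i) 2
  have hκ0 : 0 ≤ specNorm V * specNorm W * specNorm N := by
    exact mul_nonneg (mul_nonneg (specNorm_nonneg V) (specNorm_nonneg W)) (specNorm_nonneg N)
  have h6 : ‖Z‖ ≤ (specNorm V * specNorm W * specNorm N) * ‖Y‖ := by
    have h7 := mulVec_norm_le K y
    rw [← hY, ← hZ] at h7
    refine h7.trans (mul_le_mul_of_nonneg_right ?_ (norm_nonneg Y))
    have h8 : specNorm K ≤ ‖c‖ * (specNorm W * specNorm N * specNorm V) := by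
      rw [hK, specNorm]
      rw [_root_.map_smul, _root_.map_mul, _root_.map_mul]
      have hsm : ‖c • (Matrix.toEuclideanCLM (𝕜 := ℂ) W * Matrix.toEuclideanCLM (𝕜 := ℂ) N *
            Matrix.toEuclideanCLM (𝕜 := ℂ) V)‖
          = ‖c‖ * ‖Matrix.toEuclideanCLM (𝕜 := ℂ) W * Matrix.toEuclideanCLM (𝕜 := ℂ) N *
            Matrix.toEuclideanCLM (𝕜 := ℂ) V‖ := norm_smul (β := EuclideanSpace ℂ (Fin n) →L[ℂ] EuclideanSpace ℂ (Fin n)) c _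
      rw [hsm]
      refine mul_le_mul_of_nonneg_left ?_ (norm_nonneg c)
      calc ‖Matrix.toEuclideanCLM (𝕜 := ℂ) W * Matrix.toEuclideanCLM (𝕜 := ℂ) N *
            Matrix.toEuclideanCLM (𝕜 := ℂ) V‖
          ≤ ‖Matrix.toEuclideanCLM (𝕜 := ℂ) W * Matrix.toEuclideanCLM (𝕜 := ℂ) N‖ *
            ‖Matrix.toEuclideanCLM (𝕜 := ℂ) V‖ := norm_mul_le _ _
        _ ≤ ‖Matrix.toEuclideanCLM (𝕜 := ℂ) W‖ * ‖Matrix.toEuclideanCLM (𝕜 := ℂ) N‖ *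
            ‖Matrix.toEuclideanCLM (𝕜 := ℂ) V‖ :=
          mul_le_mul_of_nonneg_right (norm_mul_le _ _) (norm_nonneg _)
        _ = specNorm W * specNorm N * specNorm V := rfl
    refine h8.trans ?_
    have h9 : ‖c‖ * (specNorm W * specNorm N * specNorm V)
        ≤ 1 * (specNorm W * specNorm N * specNorm V) := by
      refine mul_le_mul_of_nonneg_right hc ?_
      exact mul_nonneg (mul_nonneg (specNorm_nonneg W) (specNorm_nonneg N)) (specNorm_nonneg V)
    refine h9.trans ?_
    rw [one_mul]
    exact le_of_eq (by ring)
  have hY0 : 0 < ‖Y‖ := by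
    rw [norm_pos_iff]
    intro h
    apply hy0
    have := congrArg (WithLp.equiv 2 (Fin n → ℂ)) h
    simpa [hY] using this
  have hmfinal : m ≤ specNorm V * specNorm W * specNorm N := by
    have := h5.trans h6
    exact le_of_mul_le_mul_right (by linarith [this]) hY0
  obtain ⟨i, _, hi⟩ := Finset.exists_mem_eq_inf' hne (fun i => ‖μ - d i‖)
  exact ⟨i, by rw [← hi]; exact hmfinal⟩

lemma charpoly_similar {n : ℕ} (V W B : Matrix (Fin n) (Fin n) ℂ)
    (hVW : V * W = 1) (hWV : W * V = 1) :
    Matrix.charpoly (V * B * W) = Matrix.charpoly B := by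
  let f : Matrix (Fin n) (Fin n) ℂ →+* Matrix (Fin n) (Fin n) ℂ[X] :=
    (Polynomial.C : ℂ →+* ℂ[X]).mapMatrix
  have hc : f V * Matrix.scalar (Fin n) (X : ℂ[X]) = Matrix.scalar (Fin n) (X : ℂ[X]) * f V :=
    (Matrix.scalar_commute (X : ℂ[X]) (fun r' => Commute.all _ _) (f V)).eq.symm
  have hfv : f V * f W = 1 := by rw [← map_mul, hVW, map_one]
  have hmm : Matrix.charmatrix (V * B * W) = f V * Matrix.charmatrix B * f W := by
    have h1 : Matrix.charmatrix (V * B * W)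
        = Matrix.scalar (Fin n) (X : ℂ[X]) - f (V * B * W) := rfl
    have h2 : Matrix.charmatrix B = Matrix.scalar (Fin n) (X : ℂ[X]) - f B := rfl
    rw [h1, h2, Matrix.mul_sub, Matrix.sub_mul, map_mul, map_mul]
    congr 1
    rw [hc, Matrix.mul_assoc, hfv, Matrix.mul_one]
  have hdet1 : (f V).det * (f W).det = 1 := by
    rw [← Matrix.det_mul, hfv, Matrix.det_one]
  calc Matrix.charpoly (V * B * W) = (f V * Matrix.charmatrix B * f W).det := by
        rw [Matrix.charpoly, hmm]
    _ = (f V).det * (Matrix.charmatrix B).det * (f W).det := by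
        rw [Matrix.det_mul, Matrix.det_mul]
    _ = (Matrix.charmatrix B).det * ((f V).det * (f W).det) := by ring
    _ = Matrix.charpoly B := by rw [hdet1, mul_one, Matrix.charpoly]

lemma charpoly_diagonal {n : ℕ} (d : Fin n → ℂ) :
    Matrix.charpoly (Matrix.diagonal d) = ∏ i, (X - C (d i)) := by
  have h : Matrix.charmatrix (Matrix.diagonal d)
      = Matrix.diagonal (fun i => (X : ℂ[X]) - C (d i)) := by
    funext i j
    by_cases h : i = j
    · subst h
      simp [Matrix.charmatrix_apply_eq]
    · rw [Matrix.charmatrix_apply_ne _ _ _ h, Matrix.diagonal_apply_ne _ h,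
        Matrix.diagonal_apply_ne _ h, map_zero, neg_zero]
  rw [Matrix.charpoly, h, Matrix.det_diagonal]

lemma roots_charpoly_diagonal {n : ℕ} (d : Fin n → ℂ) :
    (Matrix.charpoly (Matrix.diagonal d)).roots = Multiset.map d Finset.univ.val := by
  rw [charpoly_diagonal]
  have : (∏ i, ((X : ℂ[X]) - C (d i)))
      = (Multiset.map (fun a => (X : ℂ[X]) - C a) (Multiset.map d Finset.univ.val)).prod := by
    rw [Multiset.map_map]
    rfl
  rw [this, Polynomial.roots_multiset_prod_X_sub_C]

lemma card_roots_charpoly {n : ℕ} (M : Matrix (Fin n) (Fin n) ℂ) :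
    Multiset.card (Matrix.charpoly M).roots = n := by
  rcases Nat.eq_zero_or_pos n with h | h
  · subst h
    have h1 := Polynomial.card_roots' (Matrix.charpoly M)
    have h2 : (Matrix.charpoly M).natDegree = 0 := by
      have := Matrix.charpoly_natDegree_eq_dim M
      simpa using this
    omega
  · haveI : Nonempty (Fin n) := ⟨⟨0, h⟩⟩
    rw [Polynomial.splits_iff_card_roots.mp (IsAlgClosed.splits _),
      Matrix.charpoly_natDegree_eq_dim, Fintype.card_fin]

lemma cont_coeff_prod {X : Type*} [TopologicalSpace X] {ι : Type*} (s : Finset ι)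
    (f : ι → X → ℂ[X]) (h : ∀ i ∈ s, ∀ k, Continuous fun x => (f i x).coeff k) :
    ∀ k, Continuous fun x => (∏ i ∈ s, f i x).coeff k := by
  classical
  induction s using Finset.induction_on with
  | empty => intro k; simpa using continuous_const
  | insert a s' hnotmem ih =>
    intro k
    have hcont : ∀ x, (∏ i ∈ insert a s', f i x).coeff k
        = ∑ p ∈ Finset.HasAntidiagonal.antidiagonal k, (f a x).coeff p.1 * (∏ i ∈ s', f i x).coeff p.2 := by
      intro x
      rw [Finset.prod_insert hnotmem, Polynomial.coeff_mul]
    simp only [hcont]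
    apply continuous_finset_sum
    intro p _
    exact ((h a (Finset.mem_insert_self a s') p.1)).mul
      (ih (fun i hi k' => h i (Finset.mem_insert_of_mem hi) k') p.2)

lemma continuous_charpoly_coeff {n : ℕ} (j : ℕ) :
    Continuous fun M : Matrix (Fin n) (Fin n) ℂ => (Matrix.charpoly M).coeff j := by
  classical
  have hdet : ∀ M : Matrix (Fin n) (Fin n) ℂ, (Matrix.charpoly M).coeff j
      = ∑ σ : Equiv.Perm (Fin n),
          (Equiv.Perm.sign σ : ℤ) • (∏ i, Matrix.charmatrix M (σ i) i).coeff j := by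
    intro M
    rw [Matrix.charpoly, Matrix.det_apply, Polynomial.finset_sum_coeff]
    apply Finset.sum_congr rfl
    intro σ _
    rw [Polynomial.coeff_smul]
    rfl
  simp only [hdet]
  apply continuous_finset_sum
  intro σ _
  apply Continuous.const_smul
  apply cont_coeff_prod
  intro i _ k
  by_cases h : σ i = i
  · have : ∀ M : Matrix (Fin n) (Fin n) ℂ, Matrix.charmatrix M (σ i) i
        = X - C (M i i) := by
      intro M; rw [h, Matrix.charmatrix_apply_eq]
    simp only [this, Polynomial.coeff_sub, Polynomial.coeff_C]
    by_cases hk : k = 0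
    · subst hk
      exact continuous_const.sub (((continuous_apply i).comp (continuous_apply i) :
        Continuous fun M : Matrix (Fin n) (Fin n) ℂ => M i i).congr (fun M => by simp))
    · simp only [if_neg hk]
      exact continuous_const.sub continuous_const
  · have : ∀ M : Matrix (Fin n) (Fin n) ℂ, Matrix.charmatrix M (σ i) i
        = -C (M (σ i) i) := by
      intro M; rw [Matrix.charmatrix_apply_ne _ _ _ h]
    simp only [this, Polynomial.coeff_neg, Polynomial.coeff_C]
    by_cases hk : k = 0
    · subst hk
      have hcc : Continuous fun M : Matrix (Fin n) (Fin n) ℂ => M (σ i) i :=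
        (continuous_apply i).comp (continuous_apply (σ i))
      exact hcc.neg.congr (fun M => by simp)
    · simp only [if_neg hk]
      exact continuous_const.neg
lemma card_roots_monic {p : ℂ[X]} (hm : p.Monic) :
    Multiset.card p.roots = p.natDegree :=
  Polynomial.splits_iff_card_roots.mp (IsAlgClosed.splits p)

lemma tendsto_eval_varying {m : ℕ} {p : ℕ → ℂ[X]} {q : ℂ[X]}
    (hpd : ∀ k, (p k).natDegree < m) (hqd : q.natDegree < m)
    (hc : ∀ j, Tendsto (fun k => (p k).coeff j) atTop (nhds (q.coeff j)))
    {w : ℕ → ℂ} {a : ℂ} (hw : Tendsto w atTop (nhds a)) :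
    Tendsto (fun k => (p k).eval (w k)) atTop (nhds (q.eval a)) := by
  have h1 : ∀ k, (p k).eval (w k) = ∑ i ∈ Finset.range m, (p k).coeff i * (w k) ^ i :=
    fun k => Polynomial.eval_eq_sum_range' (hpd k) _
  have h2 : q.eval a = ∑ i ∈ Finset.range m, q.coeff i * a ^ i :=
    Polynomial.eval_eq_sum_range' hqd _
  rw [h2]
  apply Tendsto.congr (fun k => (h1 k).symm)
  exact tendsto_finset_sum _ (fun i _ => (hc i).mul (hw.pow i))

lemma multiset_map_univ_succ {n : ℕ} {α : Type*} (g : Fin (n + 1) → α) :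
    Multiset.map g Finset.univ.val = g 0 ::ₘ Multiset.map (g ∘ Fin.succ) Finset.univ.val := by
  rw [Fin.univ_succ, Finset.cons_val, Multiset.map_cons, Finset.map_val, Multiset.map_map]
  rfl

lemma roots_conv (n : ℕ) : ∀ (B : ℝ) (p : ℕ → ℂ[X]) (q : ℂ[X]),
    (∀ k, (p k).Monic) → (∀ k, (p k).natDegree = n) → q.Monic → q.natDegree = n →
    (∀ k z, z ∈ (p k).roots → ‖z‖ ≤ B) →
    (∀ j, Tendsto (fun k => (p k).coeff j) atTop (nhds (q.coeff j))) →
    ∃ φ : ℕ → ℕ, StrictMono φ ∧ ∃ e : ℕ → Fin n → ℂ, ∃ f : Fin n → ℂ,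
      (∀ k, (p (φ k)).roots = Multiset.map (e k) Finset.univ.val) ∧
      q.roots = Multiset.map f Finset.univ.val ∧
      (∀ j : Fin n, Tendsto (fun k => e k j) atTop (nhds (f j))) := by
  induction n with
  | zero =>
    intro B p q hpm hpd hqm hqd _ _
    refine ⟨id, strictMono_id, fun _ => Fin.elim0, Fin.elim0, ?_, ?_, fun j => j.elim0⟩
    · intro k
      have h1 : (p k).roots = 0 :=
        Multiset.card_eq_zero.mp (by rw [card_roots_monic (hpm k), hpd k])
      simp [h1]
    · have h1 : q.roots = 0 :=
        Multiset.card_eq_zero.mp (by rw [card_roots_monic hqm, hqd])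
      simp [h1]
  | succ n ih =>
    intro B p q hpm hpd hqm hqd hb hc
    have hcard : ∀ k, Multiset.card (p k).roots = n + 1 :=
      fun k => by rw [card_roots_monic (hpm k), hpd k]
    have hex : ∀ k, ∃ w, w ∈ (p k).roots := by
      intro k
      apply Multiset.exists_mem_of_ne_zero
      intro h0
      have hck := hcard k
      rw [h0] at hck
      simpa using hck
    choose z hz using hex
    have hzb : ∀ k, z k ∈ Metric.closedBall (0 : ℂ) B := by
      intro k
      rw [Metric.mem_closedBall, dist_zero_right]
      exact hb k (z k) (hz k)
    obtain ⟨a, _, φ1, hφ1, hza⟩ :=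
      (isCompact_closedBall (0 : ℂ) B).tendsto_subseq hzb
    have hcsub : ∀ j, Tendsto (fun k => (p (φ1 k)).coeff j) atTop (nhds (q.coeff j)) :=
      fun j => (hc j).comp hφ1.tendsto_atTop
    have hqa : q.eval a = 0 := by
      have h1 : Tendsto (fun k => (p (φ1 k)).eval (z (φ1 k))) atTop (nhds (q.eval a)) := by
        apply tendsto_eval_varying (m := n + 2) (fun k => by rw [hpd (φ1 k)]; omega)
          (by omega) hcsub hza
      have h2 : ∀ k, (p (φ1 k)).eval (z (φ1 k)) = 0 :=
        fun k => (Polynomial.mem_roots (hpm (φ1 k)).ne_zero).mp (hz (φ1 k))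
      exact tendsto_nhds_unique (h1.congr (fun k => h2 k)) tendsto_const_nhds
    set p' : ℕ → ℂ[X] := fun k => p (φ1 k) /ₘ (X - C (z (φ1 k))) with hp'
    set q' : ℂ[X] := q /ₘ (X - C a) with hq'
    have hfac : ∀ k, (X - C (z (φ1 k))) * p' k = p (φ1 k) := by
      intro k
      exact Polynomial.mul_divByMonic_eq_iff_isRoot.mpr
        ((Polynomial.mem_roots (hpm (φ1 k)).ne_zero).mp (hz (φ1 k)))
    have hqfac : (X - C a) * q' = q :=
      Polynomial.mul_divByMonic_eq_iff_isRoot.mpr hqa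
    have hp'm : ∀ k, (p' k).Monic := by
      intro k
      exact Polynomial.Monic.of_mul_monic_left (Polynomial.monic_X_sub_C _)
        (by rw [hfac k]; exact hpm (φ1 k))
    have hq'm : q'.Monic :=
      Polynomial.Monic.of_mul_monic_left (Polynomial.monic_X_sub_C _)
        (by rw [hqfac]; exact hqm)
    have hp'd : ∀ k, (p' k).natDegree = n := by
      intro k
      have := congrArg Polynomial.natDegree (hfac k)
      rw [Polynomial.natDegree_mul (Polynomial.X_sub_C_ne_zero _) (hp'm k).ne_zero,
        Polynomial.natDegree_X_sub_C, hpd (φ1 k)] at this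
      omega
    have hq'd : q'.natDegree = n := by
      have := congrArg Polynomial.natDegree hqfac
      rw [Polynomial.natDegree_mul (Polynomial.X_sub_C_ne_zero _) hq'm.ne_zero,
        Polynomial.natDegree_X_sub_C, hqd] at this
      omega
    have hproots : ∀ k, (p (φ1 k)).roots = z (φ1 k) ::ₘ (p' k).roots := by
      intro k
      rw [← hfac k, Polynomial.roots_mul (by rw [hfac k]; exact (hpm (φ1 k)).ne_zero),
        Polynomial.roots_X_sub_C, Multiset.singleton_add]
    have hqroots : q.roots = a ::ₘ q'.roots := by
      rw [← hqfac, Polynomial.roots_mul (by rw [hqfac]; exact hqm.ne_zero),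
        Polynomial.roots_X_sub_C, Multiset.singleton_add]
    have hb' : ∀ k w, w ∈ (p' k).roots → ‖w‖ ≤ B := by
      intro k w hw
      apply hb (φ1 k)
      rw [hproots k]
      exact Multiset.mem_cons_of_mem hw
    have hc' : ∀ j, Tendsto (fun k => (p' k).coeff j) atTop (nhds (q'.coeff j)) := by
      intro j
      have h1 : ∀ k, (p' k).coeff j
          = ∑ i ∈ Finset.Icc (j + 1) (n + 1), (z (φ1 k)) ^ (i - (j + 1)) * (p (φ1 k)).coeff i := by
        intro k
        rw [hp', Polynomial.coeff_divByMonic_X_sub_C, hpd (φ1 k)]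
      have h2 : q'.coeff j
          = ∑ i ∈ Finset.Icc (j + 1) (n + 1), a ^ (i - (j + 1)) * q.coeff i := by
        rw [hq', Polynomial.coeff_divByMonic_X_sub_C, hqd]
      rw [h2]
      apply Tendsto.congr (fun k => (h1 k).symm)
      exact tendsto_finset_sum _ (fun i _ => (hza.pow _).mul (hcsub i))
    obtain ⟨φ2, hφ2, e', f', he', hf', hconv'⟩ :=
      ih B (fun k => p' k) q' hp'm hp'd hq'm hq'd hb' hc'
    refine ⟨φ1 ∘ φ2, hφ1.comp hφ2, fun k => Fin.cons (z (φ1 (φ2 k))) (e' k),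
      Fin.cons a f', ?_, ?_, ?_⟩
    · intro k
      have hcomp : (Fin.cons (z (φ1 (φ2 k))) (e' k) : Fin (n + 1) → ℂ) ∘ Fin.succ = e' k :=
        funext (fun i => Fin.cons_succ _ _ i)
      rw [Function.comp_apply, hproots (φ2 k), he' k, multiset_map_univ_succ, hcomp]
      rfl
    · have hcomp : (Fin.cons a f' : Fin (n + 1) → ℂ) ∘ Fin.succ = f' :=
        funext (fun i => Fin.cons_succ _ _ i)
      rw [hqroots, hf', multiset_map_univ_succ, hcomp]
      rfl
    · intro j
      refine Fin.cases ?_ ?_ j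
      · simp only [Fin.cons_zero]
        exact hza.comp hφ2.tendsto_atTop
      · intro i
        simp only [Fin.cons_succ]
        exact hconv' i

noncomputable def cntB {n : ℕ} (d : Fin n → ℂ) (δ : ℝ) (P : Matrix (Fin n) (Fin n) ℂ)
    (i : Fin n) : ℕ :=
  Multiset.card ((Matrix.charpoly P).roots.filter (fun z => ‖z - d i‖ ≤ δ))

section Count

variable {n : ℕ} (V W N : Matrix (Fin n) (Fin n) ℂ) (d : Fin n → ℂ)

/-- The family of perturbed matrices. -/
noncomputable def MM (u : ℝ) : Matrix (Fin n) (Fin n) ℂ :=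
  V * Matrix.diagonal d * W + (u : ℂ) • N

lemma BF_all (hVW : V * W = 1) (hWV : W * V = 1) {t : ℝ} (ht : t ∈ Set.Icc (0:ℝ) 1)
    {z : ℂ} (hz : z ∈ (Matrix.charpoly (MM V W N d t)).roots) :
    ∃ j, ‖z - d j‖ ≤ specNorm V * specNorm W * specNorm N := by
  apply bauer_fike V W N d hVW hWV (t : ℂ) _ z hz
  rw [Complex.norm_real, Real.norm_eq_abs, abs_le]
  exact ⟨by linarith [ht.1], ht.2⟩

lemma gap_lemma (hVW : V * W = 1) (hWV : W * V = 1) {δ r : ℝ}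
    (hr : r = specNorm V * specNorm W * specNorm N)
    (hsep : ∀ i j, d i ≠ d j → 2 * δ ≤ ‖d i - d j‖)
    {t : ℝ} (ht : t ∈ Set.Icc (0:ℝ) 1)
    {z : ℂ} (hz : z ∈ (Matrix.charpoly (MM V W N d t)).roots) (i : Fin n) :
    ‖z - d i‖ ≤ r ∨ 2 * δ - r ≤ ‖z - d i‖ := by
  obtain ⟨j, hj⟩ := BF_all V W N d hVW hWV ht hz
  rw [← hr] at hj
  by_cases hij : d j = d i
  · left; rw [← hij]; exact hj
  · right
    have h1 := hsep i j (fun h => hij h.symm)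
    have h2 : ‖d i - d j‖ ≤ ‖d i - z‖ + ‖z - d j‖ :=
      norm_sub_le_norm_sub_add_norm_sub _ _ _
    have h3 : ‖d i - z‖ = ‖z - d i‖ := norm_sub_rev _ _
    linarith

lemma cnt_conv (hn : 0 < n) (hVW : V * W = 1) (hWV : W * V = 1) {δ r : ℝ}
    (hr : r = specNorm V * specNorm W * specNorm N) (hrδ : r < δ)
    (hsep : ∀ i j, d i ≠ d j → 2 * δ ≤ ‖d i - d j‖)
    {t : ℝ} (ht : t ∈ Set.Icc (0:ℝ) 1) (s : ℕ → ℝ) (hs : ∀ k, s k ∈ Set.Icc (0:ℝ) 1)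
    (hst : Filter.Tendsto s atTop (nhds t)) :
    ∃ φ : ℕ → ℕ, StrictMono φ ∧ ∀ᶠ k in atTop, ∀ i,
      cntB d δ (MM V W N d (s (φ k))) i = cntB d δ (MM V W N d t) i := by
  haveI : Nonempty (Fin n) := ⟨⟨0, hn⟩⟩
  set B : ℝ := (Finset.univ.sup' Finset.univ_nonempty fun i => ‖d i‖) + r with hB
  have hMcont : Continuous fun u : ℝ => MM V W N d u := by
    unfold MM
    exact continuous_const.add (Complex.continuous_ofReal.smul continuous_const)
  have hbound : ∀ u ∈ Set.Icc (0:ℝ) 1, ∀ z ∈ (Matrix.charpoly (MM V W N d u)).roots,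
      ‖z‖ ≤ B := by
    intro u hu z hz
    obtain ⟨j, hj⟩ := BF_all V W N d hVW hWV hu hz
    rw [← hr] at hj
    have h1 : ‖z‖ ≤ ‖d j‖ + ‖z - d j‖ := by
      calc ‖z‖ = ‖d j + (z - d j)‖ := by ring_nf
        _ ≤ _ := norm_add_le _ _
    have h2 : ‖d j‖ ≤ Finset.univ.sup' Finset.univ_nonempty
        fun i => ‖d i‖ := Finset.le_sup' (fun i => ‖d i‖) (Finset.mem_univ j)
    rw [hB]
    linarith
  obtain ⟨φ, hφ, e, f, he, hf, hconv⟩ := roots_conv n B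
    (fun k => Matrix.charpoly (MM V W N d (s k))) (Matrix.charpoly (MM V W N d t))
    (fun k => Matrix.charpoly_monic _) (fun k => by
      rw [Matrix.charpoly_natDegree_eq_dim, Fintype.card_fin])
    (Matrix.charpoly_monic _) (by rw [Matrix.charpoly_natDegree_eq_dim, Fintype.card_fin])
    (fun k z hz => hbound (s k) (hs k) z hz)
    (fun j => ((continuous_charpoly_coeff j).comp hMcont).continuousAt.tendsto.comp hst)
  refine ⟨φ, hφ, ?_⟩
  rw [Filter.eventually_all]
  intro i
  have hev : ∀ᶠ k in atTop, ∀ j : Fin n,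
      (‖e k j - d i‖ ≤ δ ↔ ‖f j - d i‖ ≤ δ) := by
    rw [Filter.eventually_all]
    intro j
    have hfj : f j ∈ (Matrix.charpoly (MM V W N d t)).roots := by
      rw [hf]
      exact Multiset.mem_map_of_mem _ (Finset.mem_univ j)
    have htendsto : Filter.Tendsto (fun k => ‖e k j - d i‖) atTop
        (nhds (‖f j - d i‖)) :=
      (continuous_norm.tendsto _).comp ((hconv j).sub_const _)
    rcases gap_lemma V W N d hVW hWV hr hsep ht hfj i with hcase | hcase
    · have h1 : ∀ᶠ k in atTop, ‖e k j - d i‖ < δ :=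
        htendsto.eventually_lt_const (lt_of_le_of_lt hcase hrδ)
      filter_upwards [h1] with k hk
      constructor
      · intro _; exact hcase.trans hrδ.le
      · intro _; exact hk.le
    · have hδlt : δ < 2 * δ - r := by linarith
      have h1 : ∀ᶠ k in atTop, δ < ‖e k j - d i‖ :=
        htendsto.eventually_const_lt (lt_of_lt_of_le hδlt hcase)
      filter_upwards [h1] with k hk
      constructor
      · intro h; linarith
      · intro h; linarith
  filter_upwards [hev] with k hk
  unfold cntB
  rw [he k, hf, Multiset.filter_map, Multiset.filter_map, Multiset.card_map, Multiset.card_map]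
  congr 1
  apply Multiset.filter_congr
  intro j _
  exact hk j

lemma cnt_stable (hn : 0 < n) (hVW : V * W = 1) (hWV : W * V = 1) {δ r : ℝ}
    (hr : r = specNorm V * specNorm W * specNorm N) (hrδ : r < δ)
    (hsep : ∀ i j, d i ≠ d j → 2 * δ ≤ ‖d i - d j‖) (i : Fin n) :
    cntB d δ (MM V W N d 1) i = cntB d δ (MM V W N d 0) i := by
  classical
  set T : Set ℝ := {u | u ∈ Set.Icc (0:ℝ) 1 ∧ ∀ i, cntB d δ (MM V W N d u) i
    = cntB d δ (MM V W N d 0) i} with hT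
  set U : Set ℝ := {u | u ∈ Set.Icc (0:ℝ) 1 ∧ ∃ i, cntB d δ (MM V W N d u) i
    ≠ cntB d δ (MM V W N d 0) i} with hU
  have hTclosed : IsClosed T := by
    apply IsSeqClosed.isClosed
    intro x t hx hxt
    have htIcc : t ∈ Set.Icc (0:ℝ) 1 :=
      isClosed_Icc.isSeqClosed (fun k => (hx k).1) hxt
    refine ⟨htIcc, ?_⟩
    intro i'
    obtain ⟨φ, hφ, hev⟩ := cnt_conv V W N d hn hVW hWV hr hrδ hsep htIcc x
      (fun k => (hx k).1) hxt
    obtain ⟨k, hk⟩ := hev.exists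
    rw [← hk i', (hx (φ k)).2 i']
  have hUclosed : IsClosed U := by
    apply IsSeqClosed.isClosed
    intro x t hx hxt
    have htIcc : t ∈ Set.Icc (0:ℝ) 1 :=
      isClosed_Icc.isSeqClosed (fun k => (hx k).1) hxt
    refine ⟨htIcc, ?_⟩
    have hfreq : ∃ i', ∃ᶠ k in atTop, cntB d δ (MM V W N d (x k)) i'
        ≠ cntB d δ (MM V W N d 0) i' := by
      by_contra hcon
      push_neg at hcon
      have := (Filter.eventually_all.mpr hcon).exists
      obtain ⟨k, hk⟩ := this
      obtain ⟨i', hi'⟩ := (hx k).2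
      exact hi' (hk i')
    obtain ⟨i', hfreq'⟩ := hfreq
    obtain ⟨φ0, hφ0, hφ0p⟩ := Filter.extraction_of_frequently_atTop hfreq'
    obtain ⟨φ1, hφ1, hev⟩ := cnt_conv V W N d hn hVW hWV hr hrδ hsep htIcc (x ∘ φ0)
      (fun k => (hx (φ0 k)).1) (hxt.comp hφ0.tendsto_atTop)
    obtain ⟨k, hk⟩ := hev.exists
    refine ⟨i', ?_⟩
    rw [← hk i']
    exact hφ0p (φ1 k)
  have hcover : Set.Icc (0:ℝ) 1 ⊆ T ∪ U := by
    intro u hu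
    by_cases h : ∀ i, cntB d δ (MM V W N d u) i = cntB d δ (MM V W N d 0) i
    · exact Or.inl ⟨hu, h⟩
    · push_neg at h
      exact Or.inr ⟨hu, h⟩
  by_contra hfinal
  have h1T : (1:ℝ) ∉ T → (1:ℝ) ∈ U := by
    intro h1
    refine ⟨⟨zero_le_one, le_refl 1⟩, ?_⟩
    by_contra hcon
    push_neg at hcon
    exact h1 ⟨⟨zero_le_one, le_refl 1⟩, hcon⟩
  have h1U : (1:ℝ) ∈ U := by
    apply h1T
    intro h1
    exact hfinal (h1.2 i)
  have h0T : (0:ℝ) ∈ T := ⟨⟨le_refl 0, zero_le_one⟩, fun _ => rfl⟩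
  obtain ⟨x, hxIcc, hxT, hxU⟩ := (isPreconnected_closed_iff.mp isPreconnected_Icc) T U
    hTclosed hUclosed hcover ⟨0, ⟨le_refl 0, zero_le_one⟩, h0T⟩ ⟨1, ⟨zero_le_one, le_refl 1⟩, h1U⟩
  obtain ⟨i', hi'⟩ := hxU.2
  exact hi' (hxT.2 i')
end Count

lemma map_get_univ {α : Type*} {n : ℕ} (l : List α) (h : l.length = n) :
    Multiset.map (fun i : Fin n => l.get (Fin.cast h.symm i)) Finset.univ.val
      = (l : Multiset α) := by
  subst h
  have h1 : (fun i : Fin l.length => l.get (Fin.cast rfl i)) = l.get := rfl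
  have h2 : (Finset.univ.val : Multiset (Fin l.length)) = ↑(List.finRange l.length) := rfl
  rw [h1, h2, Multiset.map_coe, ← List.ofFn_eq_map, List.ofFn_get]

lemma matchDist_le {n : ℕ} (v w : Fin n → ℂ) {r : ℝ} (hr : 0 ≤ r) (σ : Equiv.Perm (Fin n))
    (h : ∀ i, ‖v i - w (σ i)‖ ≤ r) : matchDist v w ≤ r := by
  unfold matchDist
  rcases isEmpty_or_nonempty (Fin n) with hemp | hne
  · have h1 : ∀ τ : Equiv.Perm (Fin n),
        (⨆ i, ‖v i - w (τ i)‖) = 0 := by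
      intro τ
      exact Real.iSup_of_isEmpty _
    simp only [h1]
    rw [ciInf_const]
    exact hr
  · have hbdd : BddBelow (Set.range fun τ : Equiv.Perm (Fin n) =>
        ⨆ i, ‖v i - w (τ i)‖) := by
      refine ⟨0, ?_⟩
      rintro x ⟨τ, rfl⟩
      exact Real.iSup_nonneg (fun i => norm_nonneg _)
    exact le_trans (ciInf_le hbdd σ) (ciSup_le h)


set_option maxHeartbeats 2000000 in
set_option synthInstance.maxHeartbeats 400000 in
/-- Bauer–Fike type bound for diagonalizable matrices:
if `A = V D V⁻¹` with `D = diagonal d`, and `‖N‖ < δ / κ₂(V)` where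
`δ = (1/2) min_{d i ≠ d j} |d i - d j|` (`+∞` if `A` has a single eigenvalue),
then `d(A, A+N) ≤ κ₂(V)·‖N‖`.  Here `W = V⁻¹` and `κ₂(V) = ‖V‖·‖W‖`;
the condition `‖N‖ < δ/κ₂(V)` is expressed pairwise (it is vacuous when `δ = +∞`). -/
theorem stmt_1 {n : ℕ} (A V W : Matrix (Fin n) (Fin n) ℂ) (d : Fin n → ℂ)
    (hVW : V * W = 1) (hWV : W * V = 1)
    (hA : A = V * Matrix.diagonal d * W)
    (N : Matrix (Fin n) (Fin n) ℂ)
    (hN : ∀ i j : Fin n, d i ≠ d j →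
      specNorm V * specNorm W * specNorm N < (1 / 2) * ‖d i - d j‖) :
    matchDist (eigs A) (eigs (A + N)) ≤ specNorm V * specNorm W * specNorm N := by
  classical
  set r := specNorm V * specNorm W * specNorm N with hrdef
  have hr0 : 0 ≤ r := by
    rw [hrdef]
    exact mul_nonneg (mul_nonneg (specNorm_nonneg V) (specNorm_nonneg W)) (specNorm_nonneg N)
  rcases Nat.eq_zero_or_pos n with hn0 | hn
  · subst hn0
    exact matchDist_le _ _ hr0 (Equiv.refl _) (fun i => i.elim0)
  haveI : Nonempty (Fin n) := ⟨⟨0, hn⟩⟩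
  set L0 := (Matrix.charpoly A).roots.toList with hL0
  have hlen0 : L0.length = n := by
    rw [hL0, Multiset.length_toList, card_roots_charpoly]
  set L1 := (Matrix.charpoly (A + N)).roots.toList with hL1
  have hlen1 : L1.length = n := by
    rw [hL1, Multiset.length_toList, card_roots_charpoly]
  set v : Fin n → ℂ := fun i => L0.get (Fin.cast hlen0.symm i) with hvdef
  set μf : Fin n → ℂ := fun j => L1.get (Fin.cast hlen1.symm j) with hμdef
  have hveq : ∀ i, eigs A i = v i := by
    intro i
    have hlt : (i : ℕ) < L0.length := by rw [hlen0]; exact i.isLt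
    rw [eigs, hvdef]
    rw [List.getD_eq_getElem _ _ hlt]
    rfl
  have hμeq : ∀ j, eigs (A + N) j = μf j := by
    intro j
    have hlt : (j : ℕ) < L1.length := by rw [hlen1]; exact j.isLt
    rw [eigs, hμdef]
    rw [List.getD_eq_getElem _ _ hlt]
    rfl
  have hv : Multiset.map v Finset.univ.val = (Matrix.charpoly A).roots := by
    rw [hvdef, map_get_univ L0 hlen0, hL0, Multiset.coe_toList]
  have hμ : Multiset.map μf Finset.univ.val = (Matrix.charpoly (A + N)).roots := by
    rw [hμdef, map_get_univ L1 hlen1, hL1, Multiset.coe_toList]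
  have hAroots : (Matrix.charpoly A).roots = Multiset.map d Finset.univ.val := by
    rw [hA, charpoly_similar V W _ hVW hWV, roots_charpoly_diagonal]
  have hA1 : A + N = MM V W N d 1 := by
    rw [hA, MM, Complex.ofReal_one, one_smul]
  have hA0 : A = MM V W N d 0 := by
    rw [hA, MM, Complex.ofReal_zero, zero_smul, add_zero]
  have hμroot : ∀ j, μf j ∈ (Matrix.charpoly (A + N)).roots := by
    intro j
    rw [← hμ]
    exact Multiset.mem_map_of_mem _ (Finset.mem_univ j)
  have hch' : ∀ j, ∃ i, ‖μf j - d i‖ ≤ r := by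
    intro j
    have h1 : μf j ∈ (Matrix.charpoly (MM V W N d 1)).roots := by
      rw [← hA1]; exact hμroot j
    obtain ⟨i, hi⟩ := BF_all V W N d hVW hWV ⟨zero_le_one, le_refl (1:ℝ)⟩ h1
    exact ⟨i, by rw [hrdef]; exact hi⟩
  choose ch hch using hch'
  set w : Fin n → ℂ := fun j => d (ch j) with hwdef
  have hvrange : ∀ i, ∃ i0, v i = d i0 := by
    intro i
    have h1 : v i ∈ (Matrix.charpoly A).roots := by
      rw [← hv]; exact Multiset.mem_map_of_mem _ (Finset.mem_univ i)
    rw [hAroots] at h1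
    obtain ⟨i0, _, hi0⟩ := Multiset.mem_map.mp h1
    exact ⟨i0, hi0.symm⟩
  by_cases hall : ∀ i j, d i = d j
  · apply matchDist_le _ _ hr0 (Equiv.refl _)
    intro i
    rw [hveq, hμeq]
    obtain ⟨i0, hi0⟩ := hvrange i
    have h2 : v i = d (ch i) := by rw [hi0]; exact hall i0 (ch i)
    simp only [Equiv.refl_apply]
    rw [h2]
    calc ‖d (ch i) - μf i‖ = ‖μf i - d (ch i)‖ :=
        norm_sub_rev _ _
      _ ≤ r := hch i
  · push_neg at hall
    obtain ⟨i₀, j₀, hij₀⟩ := hall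
    set P := Finset.univ.filter (fun p : Fin n × Fin n => d p.1 ≠ d p.2) with hP
    have hPne : P.Nonempty := ⟨(i₀, j₀), by simp [hP, hij₀]⟩
    set δ := (1/2) * P.inf' hPne (fun p => ‖d p.1 - d p.2‖) with hδ
    have hrδ : r < δ := by
      obtain ⟨p, hpP, hpeq⟩ := Finset.exists_mem_eq_inf' hPne
        (fun p => ‖d p.1 - d p.2‖)
      have hp12 : d p.1 ≠ d p.2 := by
        rw [hP] at hpP
        simpa using (Finset.mem_filter.mp hpP).2
      have := hN p.1 p.2 hp12
      rw [hδ, hpeq]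
      rw [hrdef]
      linarith
    have hsep : ∀ i j, d i ≠ d j → 2 * δ ≤ ‖d i - d j‖ := by
      intro i j hij
      have h1 : P.inf' hPne (fun p => ‖d p.1 - d p.2‖)
          ≤ ‖d i - d j‖ :=
        Finset.inf'_le _ (Finset.mem_filter.mpr ⟨Finset.mem_univ (i, j), hij⟩)
      rw [hδ]
      linarith
    have hδ0 : 0 < δ := lt_of_le_of_lt hr0 hrδ
    have hcnt := cnt_stable V W N d hn hVW hWV hrdef hrδ hsep
    -- roots of MM at 1 and 0
    have hroots1 : (Matrix.charpoly (MM V W N d 1)).roots = Multiset.map μf Finset.univ.val := by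
      rw [← hA1, hμ]
    have hroots0 : (Matrix.charpoly (MM V W N d 0)).roots = Multiset.map d Finset.univ.val := by
      rw [← hA0, hAroots]
    -- fiber counts
    have hwiff : ∀ (i0 : Fin n) (j : Fin n),
        w j = d i0 ↔ ‖μf j - d i0‖ ≤ δ := by
      intro i0 j
      constructor
      · intro hj
        rw [← hj]
        exact (hch j).trans hrδ.le
      · intro hj
        by_contra hne
        have hne' : d (ch j) ≠ d i0 := hne
        have h1 := hsep _ _ hne'
        have h2 : ‖d (ch j) - d i0‖
            ≤ ‖d (ch j) - μf j‖ + ‖μf j - d i0‖ :=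
          norm_sub_le_norm_sub_add_norm_sub _ _ _
        have h3 : ‖d (ch j) - μf j‖ = ‖μf j - d (ch j)‖ :=
          norm_sub_rev _ _
        have h4 := hch j
        linarith
    have hfib : ∀ a : ℂ, Fintype.card {i // v i = a} = Fintype.card {j // w j = a} := by
      intro a
      by_cases ha : ∃ i0, a = d i0
      · obtain ⟨i0, rfl⟩ := ha
        have hcard1 : Fintype.card {i // v i = d i0}
            = Multiset.count (d i0) (Multiset.map d Finset.univ.val) := by
          rw [Fintype.card_subtype]
          rw [← hAroots, ← hv, Multiset.count_map]
          calc (Finset.filter (fun i => v i = d i0) Finset.univ).card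
              = Multiset.card (Multiset.filter (fun i => v i = d i0) Finset.univ.val) := by
                rw [← Finset.filter_val]; rfl
            _ = Multiset.card (Multiset.filter (fun i => d i0 = v i) Finset.univ.val) := by
                rw [Multiset.filter_congr (fun x _ => eq_comm)]
        have hcard2 : Fintype.card {j // w j = d i0} = cntB d δ (MM V W N d 1) i0 := by
          rw [Fintype.card_subtype, cntB, hroots1, Multiset.filter_map, Multiset.card_map]
          calc (Finset.filter (fun j => w j = d i0) Finset.univ).card
              = Multiset.card (Multiset.filter (fun j => w j = d i0) Finset.univ.val) := by
                rw [← Finset.filter_val]; rfl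
            _ = Multiset.card (Multiset.filter
                  ((fun z => ‖z - d i0‖ ≤ δ) ∘ μf) Finset.univ.val) := by
                have heq : Multiset.filter (fun j => w j = d i0) Finset.univ.val
                    = Multiset.filter ((fun z => ‖z - d i0‖ ≤ δ) ∘ μf)
                        Finset.univ.val :=
                  Multiset.filter_congr (fun x _ => hwiff i0 x)
                rw [heq]
        have hcard0 : cntB d δ (MM V W N d 0) i0
            = Multiset.count (d i0) (Multiset.map d Finset.univ.val) := by
          rw [cntB, hroots0, Multiset.filter_map, Multiset.card_map, Multiset.count_map]
          congr 1
          apply Multiset.filter_congr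
          intro x _
          constructor
          · intro hx
            by_contra hne
            have hne' : d x ≠ d i0 := fun h => hne h.symm
            have h1 := hsep _ _ hne'
            simp only [Function.comp_apply] at hx
            linarith
          · intro hx
            simp only [Function.comp_apply]
            rw [← hx]
            simpa using hδ0.le
        rw [hcard1, hcard2, hcnt i0, hcard0]
      · push_neg at ha
        have h1 : Fintype.card {i // v i = a} = 0 := by
          rw [Fintype.card_eq_zero_iff]
          refine ⟨fun ⟨x, hx⟩ => ?_⟩
          obtain ⟨i0, hi0⟩ := hvrange x
          exact ha i0 (hx ▸ hi0 ▸ rfl : a = d i0)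
        have h2 : Fintype.card {j // w j = a} = 0 := by
          rw [Fintype.card_eq_zero_iff]
          refine ⟨fun ⟨x, hx⟩ => ?_⟩
          exact ha (ch x) hx.symm
        rw [h1, h2]
    set σ : Equiv.Perm (Fin n) :=
      Equiv.ofFiberEquiv (f := v) (g := w) (fun a => Fintype.equivOfCardEq (hfib a)) with hσ
    have hσprop : ∀ i, w (σ i) = v i := fun i => Equiv.ofFiberEquiv_map _ i
    apply matchDist_le _ _ hr0 σ
    intro i
    rw [hveq, hμeq, ← hσprop i, hwdef]
    calc ‖d (ch (σ i)) - μf (σ i)‖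
        = ‖μf (σ i) - d (ch (σ i))‖ := norm_sub_rev _ _
      _ ≤ r := hch (σ i)
end

section
/- Let d_n be a pseudometric on ℂ^{n×n} for each n, all bounded by a common constant L > 0. Then d({A_n}, {B_n}) := limsup_{n→∞} d_n(A_n, B_n) is a complete pseudometric on the space of matrix-sequences. -/
open Filter MeasureTheory
open scoped Matrix
open Asymptotics
open scoped BigOperators

/-- given pseudometrics `d n` on `ℂ^{n×n}` uniformly bounded by `L > 0`,
`d({A_n},{B_n}) = limsup_n d n (A_n) (B_n)` is a complete pseudometric on matrix-sequences:
it is nonnegative, reflexive, symmetric, satisfies the triangle inequality, and every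
Cauchy sequence of matrix-sequences converges. -/
theorem stmt_6 (d : ∀ n : ℕ, Matrix (Fin n) (Fin n) ℂ → Matrix (Fin n) (Fin n) ℂ → ℝ)
    (L : ℝ) (hL : 0 < L)
    (h_nonneg : ∀ n A B, 0 ≤ d n A B)
    (h_refl : ∀ n A, d n A A = 0)
    (h_symm : ∀ n A B, d n A B = d n B A)
    (h_tri : ∀ n A B C, d n A C ≤ d n A B + d n B C)
    (h_bdd : ∀ n A B, d n A B ≤ L) :
    (∀ A B : MatSeq, 0 ≤ Filter.atTop.limsup fun n => d n (A n) (B n)) ∧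
    (∀ A : MatSeq, (Filter.atTop.limsup fun n => d n (A n) (A n)) = 0) ∧
    (∀ A B : MatSeq,
      (Filter.atTop.limsup fun n => d n (A n) (B n)) =
        Filter.atTop.limsup fun n => d n (B n) (A n)) ∧
    (∀ A B C : MatSeq,
      (Filter.atTop.limsup fun n => d n (A n) (C n)) ≤
        (Filter.atTop.limsup fun n => d n (A n) (B n)) +
          Filter.atTop.limsup fun n => d n (B n) (C n)) ∧
    (∀ S : ℕ → MatSeq,
      (∀ ε : ℝ, 0 < ε → ∃ M : ℕ, ∀ j k : ℕ, M ≤ j → M ≤ k →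
        (Filter.atTop.limsup fun n => d n (S j n) (S k n)) < ε) →
      ∃ B : MatSeq,
        Tendsto (fun j => Filter.atTop.limsup fun n => d n (S j n) (B n)) atTop (nhds 0)) := by
  -- basic boundedness facts
  have hble : ∀ A B : MatSeq, IsBoundedUnder (· ≤ ·) atTop (fun n => d n (A n) (B n)) :=
    fun A B => ⟨L, Filter.eventually_map.2 (Eventually.of_forall fun n => h_bdd n _ _)⟩
  have hbge : ∀ A B : MatSeq, IsBoundedUnder (· ≥ ·) atTop (fun n => d n (A n) (B n)) :=
    fun A B => ⟨0, Filter.eventually_map.2 (Eventually.of_forall fun n => h_nonneg n _ _)⟩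
  have hcob : ∀ A B : MatSeq, IsCoboundedUnder (· ≤ ·) atTop (fun n => d n (A n) (B n)) :=
    fun A B => (hbge A B).isCoboundedUnder_le
  have hnn : ∀ A B : MatSeq, 0 ≤ Filter.atTop.limsup fun n => d n (A n) (B n) := by
    intro A B
    exact le_limsup_of_frequently_le
      (Eventually.frequently (Eventually.of_forall fun n => h_nonneg n _ _)) (hble A B)
  have htri : ∀ A B C : MatSeq,
      (Filter.atTop.limsup fun n => d n (A n) (C n)) ≤
        (Filter.atTop.limsup fun n => d n (A n) (B n)) +
          Filter.atTop.limsup fun n => d n (B n) (C n) := by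
    intro A B C
    have h1 : (Filter.atTop.limsup fun n => d n (A n) (C n)) ≤
        Filter.atTop.limsup ((fun n => d n (A n) (B n)) + fun n => d n (B n) (C n)) := by
      exact limsup_le_limsup (Eventually.of_forall fun n => h_tri n _ _ _) (hcob A C)
        ⟨L + L, Filter.eventually_map.2 (Eventually.of_forall fun n =>
          add_le_add (h_bdd n _ _) (h_bdd n _ _))⟩
    exact h1.trans (limsup_add_le (hbge A B) (hble A B) (hcob B C) (hble B C))
  refine ⟨hnn, ?_, ?_, htri, ?_⟩
  · intro A
    have : (fun n => d n (A n) (A n)) = fun _ : ℕ => (0 : ℝ) := funext fun n => h_refl n _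
    rw [this, limsup_const]
  · intro A B
    congr 1
    exact funext fun n => h_symm n _ _
  intro S hC
  have hM : ∀ m : ℕ, ∃ M : ℕ, ∀ j k : ℕ, M ≤ j → M ≤ k →
      (Filter.atTop.limsup fun n => d n (S j n) (S k n)) < (1/2 : ℝ) ^ m :=
    fun m => hC _ (by positivity)
  choose M₀ hM₀ using hM
  set Mb : ℕ → ℕ := fun m => (Finset.range (m + 1)).sup M₀ with hMb
  have hMbmono : Monotone Mb := fun a b hab =>
    Finset.sup_mono (Finset.range_subset_range.2 (by omega))
  have hMbge : ∀ m, M₀ m ≤ Mb m := fun m =>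
    Finset.le_sup (Finset.self_mem_range_succ m)
  have hMb' : ∀ m, ∀ j k : ℕ, Mb m ≤ j → Mb m ≤ k →
      (Filter.atTop.limsup fun n => d n (S j n) (S k n)) < (1/2 : ℝ) ^ m :=
    fun m j k hj hk => hM₀ m j k ((hMbge m).trans hj) ((hMbge m).trans hk)
  have hev : ∀ m : ℕ, ∃ N : ℕ, ∀ n, N ≤ n →
      d n (S (Mb m) n) (S (Mb (m + 1)) n) < (1/2 : ℝ) ^ m := by
    intro m
    have := eventually_lt_of_limsup_lt
      (hMb' m (Mb m) (Mb (m + 1)) le_rfl (hMbmono (Nat.le_succ m)))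
      (hble (fun n => S (Mb m) n) (fun n => S (Mb (m + 1)) n))
    exact eventually_atTop.1 this
  choose N₀ hN₀ using hev
  obtain ⟨N, hNstep, hNge⟩ : ∃ N : ℕ → ℕ, (∀ m, N m < N (m + 1)) ∧ ∀ m, N₀ m ≤ N m := by
    refine ⟨fun m => Nat.rec (motive := fun _ => ℕ) (N₀ 0)
      (fun m ih => max (N₀ (m + 1)) (ih + 1)) m, fun m => ?_, fun m => ?_⟩
    · exact lt_of_lt_of_le (Nat.lt_succ_self _) (le_max_right _ _)
    · cases m with
      | zero => exact le_rfl
      | succ m => exact le_max_left _ _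
  have hNmono : StrictMono N := strictMono_nat_of_lt_succ hNstep
  set idx : ℕ → ℕ := fun n => Nat.findGreatest (fun m => N m ≤ n) n with hidx
  set B : MatSeq := fun n => S (Mb (idx n)) n with hB
  have hNgrow : ∀ m, m ≤ N m := fun m => hNmono.le_apply
  have hidxge : ∀ k n, N k ≤ n → k ≤ idx n := by
    intro k n hkn
    exact Nat.le_findGreatest ((hNgrow k).trans hkn) hkn
  have hidxspec : ∀ k n, N k ≤ n → N (idx n) ≤ n := by
    intro k n hkn
    exact Nat.findGreatest_spec (P := fun m => N m ≤ n) ((hNgrow k).trans hkn) hkn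
  have hchain : ∀ n k m, k ≤ m → N m ≤ n →
      d n (S (Mb k) n) (S (Mb m) n) ≤ 2 * (1/2 : ℝ) ^ k - 2 * (1/2 : ℝ) ^ m := by
    intro n k m hkm
    induction m, hkm using Nat.le_induction with
    | base => intro _; rw [h_refl]; simp
    | succ m hkm ih =>
      intro hn
      have hm : N m ≤ n := (hNstep m).le.trans hn
      have h1 := ih hm
      have h2 : d n (S (Mb m) n) (S (Mb (m + 1)) n) < (1/2 : ℝ) ^ m :=
        hN₀ m n ((hNge m).trans hm)
      have h3 := h_tri n (S (Mb k) n) (S (Mb m) n) (S (Mb (m + 1)) n)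
      have hpow : (1/2 : ℝ) ^ (m + 1) = (1/2 : ℝ) ^ m / 2 := by ring
      nlinarith
  have hBnd : ∀ k n, N k ≤ n → d n (S (Mb k) n) (B n) ≤ 2 * (1/2 : ℝ) ^ k := by
    intro k n hkn
    have h1 := hchain n k (idx n) (hidxge k n hkn) (hidxspec k n hkn)
    have h2 : (0 : ℝ) < (1/2 : ℝ) ^ idx n := by positivity
    simp only [hB]
    nlinarith
  have hlsB : ∀ k, (Filter.atTop.limsup fun n => d n (S (Mb k) n) (B n)) ≤
      2 * (1/2 : ℝ) ^ k := by
    intro k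
    apply limsup_le_of_le (hcob (fun n => S (Mb k) n) B)
    exact eventually_atTop.2 ⟨N k, hBnd k⟩
  refine ⟨B, ?_⟩
  rw [Metric.tendsto_atTop]
  intro ε hε
  obtain ⟨k, hk⟩ := exists_pow_lt_of_lt_one (by positivity : (0:ℝ) < ε / 3)
    (by norm_num : (1/2 : ℝ) < 1)
  refine ⟨Mb k, fun j hj => ?_⟩
  have h1 : (Filter.atTop.limsup fun n => d n (S j n) (B n)) ≤
      (Filter.atTop.limsup fun n => d n (S j n) (S (Mb k) n)) +
        Filter.atTop.limsup fun n => d n (S (Mb k) n) (B n) :=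
    htri (S j) (S (Mb k)) B
  have h2 : (Filter.atTop.limsup fun n => d n (S j n) (S (Mb k) n)) < (1/2 : ℝ) ^ k :=
    hMb' k j (Mb k) hj le_rfl
  have h3 := hlsB k
  have h4 := hnn (S j) B
  rw [Real.dist_eq, sub_zero, abs_of_nonneg h4]
  nlinarith
end

section
/- For every matrix-sequence {A_n}_n with spectral symbol f, there exists a sequence of positive reals ε_n such that whenever ‖N_n‖ ≤ ε_n for all n (spectral norm), the perturbed sequence {A_n + N_n}_n also has spectral symbol f. -/
open Filter MeasureTheory
open scoped Matrix
open Asymptotics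
open scoped BigOperators

section Aux

open Polynomial

lemma charpoly_roots_card {n : ℕ} (B : Matrix (Fin n) (Fin n) ℂ) :
    Multiset.card (Matrix.charpoly B).roots = n := by
  rw [Polynomial.splits_iff_card_roots.mp (IsAlgClosed.splits _),
    Matrix.charpoly_natDegree_eq_dim, Fintype.card_fin]

lemma eigs_toList {n : ℕ} (B : Matrix (Fin n) (Fin n) ℂ) :
    List.ofFn (eigs B) = (Matrix.charpoly B).roots.toList := by
  have hlen : (Matrix.charpoly B).roots.toList.length = n := by
    rw [Multiset.length_toList, charpoly_roots_card]
  apply List.ext_getElem (by simp [hlen])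
  intro i h1 h2
  simp only [List.getElem_ofFn, eigs]
  rw [List.getD_eq_getElem _ _ (by omega)]

lemma eigs_multiset {n : ℕ} (B : Matrix (Fin n) (Fin n) ℂ) :
    (↑(List.ofFn (eigs B)) : Multiset ℂ) = (Matrix.charpoly B).roots := by
  rw [eigs_toList, Multiset.coe_toList]

lemma sum_map_ofFn {n : ℕ} (w : Fin n → ℂ) (g : ℂ → ℂ) :
    ((↑(List.ofFn w) : Multiset ℂ).map g).sum = ∑ i, g (w i) := by
  simp [Multiset.map_coe, List.map_ofFn, List.sum_ofFn, Function.comp]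

lemma prod_map_ofFn {n : ℕ} (w : Fin n → ℂ) (g : ℂ → ℂ) :
    ((↑(List.ofFn w) : Multiset ℂ).map g).prod = ∏ i, g (w i) := by
  simp [Multiset.map_coe, List.map_ofFn, List.prod_ofFn, Function.comp]

lemma sum_eigs_eq {n : ℕ} (B : Matrix (Fin n) (Fin n) ℂ) (g : ℂ → ℂ) :
    ∑ i, g (eigs B i) = ((Matrix.charpoly B).roots.map g).sum := by
  rw [← eigs_multiset, sum_map_ofFn]

lemma eval_charpoly_eq_prod {n : ℕ} (B : Matrix (Fin n) (Fin n) ℂ) (z : ℂ) :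
    (Matrix.charpoly B).eval z = ∏ i, (z - eigs B i) := by
  conv_lhs => rw [(IsAlgClosed.splits _).eq_prod_roots_of_monic (Matrix.charpoly_monic B)]
  rw [← eigs_multiset]
  simp only [Polynomial.eval_multiset_prod, Multiset.map_map, Function.comp_def,
    Polynomial.eval_sub, Polynomial.eval_X, Polynomial.eval_C]
  rw [prod_map_ofFn]

lemma eval_charpoly_det {n : ℕ} (B : Matrix (Fin n) (Fin n) ℂ) (z : ℂ) :
    (Matrix.charpoly B).eval z = (Matrix.scalar (Fin n) z - B).det := by
  rw [Matrix.charpoly, eval_det, Matrix.matPolyEquiv_charmatrix]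
  simp

lemma coord_norm_le {n : ℕ} (y : EuclideanSpace ℂ (Fin n)) (i : Fin n) :
    ‖y i‖ ≤ ‖y‖ := by
  rw [EuclideanSpace.norm_eq]
  rw [show ‖y i‖ = Real.sqrt (‖y i‖ ^ 2) by
    rw [Real.sqrt_sq (norm_nonneg _)]]
  apply Real.sqrt_le_sqrt
  exact Finset.single_le_sum (f := fun j => ‖y j‖ ^ 2) (fun j _ => by positivity)
    (Finset.mem_univ i)

lemma entry_norm_le_specNorm {n : ℕ} (N : Matrix (Fin n) (Fin n) ℂ) (i j : Fin n) :
    ‖N i j‖ ≤ specNorm N := by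
  classical
  have h := Matrix.toEuclideanCLM_toLp (𝕜 := ℂ) N (Pi.single j 1)
  set x : EuclideanSpace ℂ (Fin n) := WithLp.toLp 2 (Pi.single j 1) with hx
  have hxnorm : ‖x‖ = 1 := by
    rw [hx, show WithLp.toLp 2 (Pi.single j 1)
      = EuclideanSpace.single j (1 : ℂ) from rfl, EuclideanSpace.norm_single, norm_one]
  have happ : (Matrix.toEuclideanCLM (𝕜 := ℂ) N x) i = N i j := by
    rw [h]
    show (N *ᵥ Pi.single j 1) i = N i j
    rw [Matrix.mulVec_single]
    exact mul_one _
  calc ‖N i j‖ = ‖(Matrix.toEuclideanCLM (𝕜 := ℂ) N x) i‖ := by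
        rw [happ]
    _ ≤ ‖Matrix.toEuclideanCLM (𝕜 := ℂ) N x‖ := coord_norm_le _ i
    _ ≤ ‖Matrix.toEuclideanCLM (𝕜 := ℂ) N‖ * ‖x‖ := ContinuousLinearMap.le_opNorm _ _
    _ = specNorm N := by rw [hxnorm, mul_one]; rfl

lemma eigs_norm_le {n : ℕ} (B : Matrix (Fin n) (Fin n) ℂ) (i : Fin n) :
    ‖eigs B i‖ ≤ specNorm B := by
  haveI : Nonempty (Fin n) := ⟨i⟩
  set z := eigs B i with hz
  have hroot : z ∈ (Matrix.charpoly B).roots := by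
    rw [← eigs_multiset, Multiset.mem_coe]
    exact List.mem_ofFn.mpr ⟨i, rfl⟩
  have hev : (Matrix.charpoly B).IsRoot z :=
    (Polynomial.mem_roots (Matrix.charpoly_monic B).ne_zero).mp hroot
  have hdet : (Matrix.scalar (Fin n) z - B).det = 0 := by rw [← eval_charpoly_det]; exact hev
  have hns : ¬ IsUnit (Matrix.scalar (Fin n) z - B) := by
    rw [Matrix.isUnit_iff_isUnit_det, hdet]
    simp [isUnit_iff_ne_zero]
  have halg : algebraMap ℂ (Matrix (Fin n) (Fin n) ℂ) z = Matrix.scalar (Fin n) z := by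
    simp [Matrix.algebraMap_eq_diagonal, Matrix.scalar_apply]
  have hmem : z ∈ spectrum ℂ B := by
    rw [spectrum.mem_iff, halg]
    exact hns
  have heq : (Matrix.toEuclideanCLM (n := Fin n) (𝕜 := ℂ)).symm
      (algebraMap ℂ (EuclideanSpace ℂ (Fin n) →L[ℂ] EuclideanSpace ℂ (Fin n)) z
        - Matrix.toEuclideanCLM (𝕜 := ℂ) B)
      = algebraMap ℂ (Matrix (Fin n) (Fin n) ℂ) z - B := by
    rw [map_sub]
    congr 1
    · rw [Algebra.algebraMap_eq_smul_one, Algebra.algebraMap_eq_smul_one, _root_.map_smul, map_one]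
    · exact StarAlgEquiv.symm_apply_apply _ _
  have hmem' : z ∈ spectrum ℂ (Matrix.toEuclideanCLM (𝕜 := ℂ) B) := by
    rw [spectrum.mem_iff]
    intro hu
    apply (spectrum.mem_iff.mp hmem)
    have h2 := hu.map
      ((Matrix.toEuclideanCLM (n := Fin n) (𝕜 := ℂ)).symm : _ ≃⋆ₐ[ℂ] _).toRingEquiv
    rwa [show (((Matrix.toEuclideanCLM (n := Fin n) (𝕜 := ℂ)).symm
        : _ ≃⋆ₐ[ℂ] _).toRingEquiv : _ → _)
      = ((Matrix.toEuclideanCLM (n := Fin n) (𝕜 := ℂ)).symm : _ ≃⋆ₐ[ℂ] _) from rfl,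
      heq] at h2
  have := spectrum.norm_le_norm_of_mem hmem'
  simpa [specNorm] using this

/-- Key perturbation lemma: roots of the charpoly depend continuously on the matrix,
in the optimal-matching sense. -/
lemma key_perturb {n : ℕ} (A : Matrix (Fin n) (Fin n) ℂ) {ε : ℝ} (hε : 0 < ε) :
    ∃ δ : ℝ, 0 < δ ∧ ∀ N : Matrix (Fin n) (Fin n) ℂ, specNorm N ≤ δ →
      ∃ w : Fin n → ℂ, (↑(List.ofFn w) : Multiset ℂ) = (Matrix.charpoly A).roots ∧
        ∀ i, ‖eigs (A + N) i - w i‖ ≤ ε := by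
  by_contra hcon
  push_neg at hcon
  have hstep : ∀ k : ℕ, ∃ N : Matrix (Fin n) (Fin n) ℂ, specNorm N ≤ 1 / (k + 1) ∧
      ∀ w : Fin n → ℂ, (↑(List.ofFn w) : Multiset ℂ) = (Matrix.charpoly A).roots →
        ∃ i, ε < ‖eigs (A + N) i - w i‖ := by
    intro k
    obtain ⟨N, hN1, hN2⟩ := hcon (1 / (k + 1)) (by positivity)
    exact ⟨N, hN1, fun w hw => hN2 w hw⟩
  choose N hNle hNbad using hstep
  set v : ℕ → (Fin n → ℂ) := fun k => eigs (A + N k) with hv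
  -- the eigenvalue tuples are bounded
  have hvb : ∀ k, v k ∈ Metric.closedBall (0 : Fin n → ℂ) (specNorm A + 1) := by
    intro k
    rw [Metric.mem_closedBall, dist_zero_right]
    rw [pi_norm_le_iff_of_nonneg]
    · intro i
      calc ‖v k i‖ = ‖eigs (A + N k) i‖ := rfl
        _ ≤ specNorm (A + N k) := eigs_norm_le _ i
        _ ≤ specNorm A + specNorm (N k) := by
            simp only [specNorm, map_add]
            exact norm_add_le _ _
        _ ≤ specNorm A + 1 := by
            have := hNle k
            have h1 : (1 : ℝ) / (k + 1) ≤ 1 := by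
              rw [div_le_one (by positivity)]; linarith [Nat.cast_nonneg (α := ℝ) k]
            linarith
    · have : (0:ℝ) ≤ specNorm A := norm_nonneg _
      linarith
  obtain ⟨w, -, φ, hφ, hwlim⟩ :=
    (isCompact_closedBall (0 : Fin n → ℂ) (specNorm A + 1)).tendsto_subseq hvb
  -- the matrices converge entrywise
  have hNlim : ∀ i j : Fin n, Filter.Tendsto (fun k => (A + N (φ k)) i j)
      Filter.atTop (nhds (A i j)) := by
    intro i j
    have : Filter.Tendsto (fun k => N (φ k) i j) Filter.atTop (nhds 0) := by
      rw [tendsto_iff_norm_sub_tendsto_zero]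
      apply squeeze_zero (fun k => by positivity) (g := fun k => 1 / (φ k + 1 : ℝ))
      · intro k
        simp only [sub_zero]
        calc ‖N (φ k) i j‖ = ‖N (φ k) i j‖ := rfl
          _ ≤ specNorm (N (φ k)) := entry_norm_le_specNorm _ i j
          _ ≤ 1 / (φ k + 1) := hNle (φ k)
      · have h1 : Filter.Tendsto (fun k : ℕ => 1 / ((k : ℝ) + 1)) Filter.atTop (nhds 0) :=
          tendsto_one_div_add_atTop_nhds_zero_nat
        exact h1.comp hφ.tendsto_atTop
    have := this.const_add (A i j)
    simpa using this
  -- the limit tuple w satisfies ∏ (z - w i) = eval z (charpoly A) for all z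
  have hprod : ∀ z : ℂ, ∏ i, (z - w i) = (Matrix.charpoly A).eval z := by
    intro z
    have h1 : Filter.Tendsto (fun k => ∏ i, (z - v (φ k) i)) Filter.atTop
        (nhds (∏ i, (z - w i))) := by
      apply tendsto_finset_prod
      intro i _
      exact (tendsto_const_nhds.sub ((continuous_apply i).continuousAt.tendsto.comp hwlim))
    have h2 : Filter.Tendsto (fun k => ∏ i, (z - v (φ k) i)) Filter.atTop
        (nhds ((Matrix.charpoly A).eval z)) := by
      have heq : ∀ k, ∏ i, (z - v (φ k) i) = (Matrix.scalar (Fin n) z - (A + N (φ k))).det := by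
        intro k
        rw [← eval_charpoly_det, eval_charpoly_eq_prod]
      simp_rw [heq, eval_charpoly_det A z]
      apply Filter.Tendsto.comp (Continuous.matrix_det (by fun_prop)).continuousAt
      apply tendsto_pi_nhds.mpr
      intro i
      rw [tendsto_pi_nhds]
      intro j
      exact hNlim i j
    exact tendsto_nhds_unique h1 h2
  -- hence the multiset of w equals the roots of charpoly A
  have hmul : (↑(List.ofFn w) : Multiset ℂ) = (Matrix.charpoly A).roots := by
    have hpoly : ((↑(List.ofFn w) : Multiset ℂ).map fun a => X - C a).prod
        = Matrix.charpoly A := by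
      apply Polynomial.funext
      intro z
      simp only [Polynomial.eval_multiset_prod, Multiset.map_map, Function.comp_def,
        Polynomial.eval_sub, Polynomial.eval_X, Polynomial.eval_C]
      rw [prod_map_ofFn, hprod]
    rw [← hpoly, Polynomial.roots_multiset_prod_X_sub_C]
  -- eventually v (φ k) is close to w, contradiction
  have hev : ∀ᶠ k in Filter.atTop, dist (v (φ k)) w < ε :=
    Metric.tendsto_nhds.mp hwlim ε hε
  obtain ⟨k, hk⟩ := hev.exists
  obtain ⟨i, hi⟩ := hNbad (φ k) w hmul
  have : ‖eigs (A + N (φ k)) i - w i‖ ≤ ε := by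
    have h1 : dist (v (φ k) i) (w i) ≤ dist (v (φ k)) w := dist_le_pi_dist _ _ i
    have h2 : dist (v (φ k) i) (w i) = ‖eigs (A + N (φ k)) i - w i‖ := by
      rw [Complex.dist_eq]
    linarith [le_of_lt hk]
  exact absurd hi (not_lt.mpr this)

end Aux

/-- for every matrix-sequence with spectral symbol `f` there are positive
reals `ε_n` such that any perturbation with `‖N_n‖ ≤ ε_n` preserves the spectral symbol. -/
theorem stmt_12 {q : ℕ} (A : MatSeq) (D : Set (Fin q → ℝ)) (f : (Fin q → ℝ) → ℂ)
    (hA : SymbolOf A D f) :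
    ∃ ε : ℕ → ℝ, (∀ n, 0 < ε n) ∧
      ∀ N : MatSeq, (∀ n, specNorm (N n) ≤ ε n) →
        SymbolOf (fun n => A n + N n) D f := by
  classical
  obtain ⟨hD1, hD2, hD3, hlim⟩ := hA
  have hkey : ∀ n : ℕ, ∃ δ : ℝ, 0 < δ ∧ ∀ N : Matrix (Fin n) (Fin n) ℂ, specNorm N ≤ δ →
      ∃ w : Fin n → ℂ, (↑(List.ofFn w) : Multiset ℂ) = (Matrix.charpoly (A n)).roots ∧
        ∀ i, ‖eigs (A n + N) i - w i‖ ≤ 1 / (n + 1) :=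
    fun n => key_perturb (A n) (by positivity)
  choose δf hδpos hδ using hkey
  refine ⟨δf, hδpos, ?_⟩
  intro N hN
  refine ⟨hD1, hD2, hD3, ?_⟩
  intro F hF hFc
  have hlimF := hlim F hF hFc
  -- matching tuples
  choose w hw1 hw2 using fun n => hδ n (N n) (hN n)
  -- uniform continuity of F
  have hUC : UniformContinuous F :=
    hF.uniformContinuous_of_tendsto_cocompact hFc.is_zero_at_infty
  -- the difference tends to zero
  have hdiff : Filter.Tendsto
      (fun n : ℕ => (n : ℂ)⁻¹ * (∑ i, F (eigs (A n + N n) i) - ∑ i, F (eigs (A n) i)))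
      Filter.atTop (nhds 0) := by
    rw [NormedAddCommGroup.tendsto_nhds_zero]
    intro ε' hε'
    obtain ⟨δ', hδ'pos, hδ'⟩ := Metric.uniformContinuous_iff.mp hUC (ε' / 2) (by positivity)
    have h1 : ∀ᶠ n : ℕ in Filter.atTop, (1 : ℝ) / (n + 1) < δ' :=
      tendsto_one_div_add_atTop_nhds_zero_nat.eventually (gt_mem_nhds hδ'pos)
    filter_upwards [h1, Filter.eventually_ge_atTop 1] with n hn hn1
    have hsum2 : ∑ i, F (eigs (A n) i) = ∑ i, F (w n i) := by
      rw [sum_eigs_eq, ← hw1 n, sum_map_ofFn]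
    rw [hsum2]
    have hterm : ∀ i : Fin n, ‖F (eigs (A n + N n) i) - F (w n i)‖ ≤ ε' / 2 := by
      intro i
      have hd : dist (eigs (A n + N n) i) (w n i) < δ' := by
        have := hw2 n i
        rw [Complex.dist_eq]
        calc ‖eigs (A n + N n) i - w n i‖ ≤ 1 / (n + 1) := this
          _ < δ' := hn
      have := hδ' hd
      rw [dist_eq_norm] at this
      linarith
    have hbound : ‖∑ i, F (eigs (A n + N n) i) - ∑ i, F (w n i)‖ ≤ n * (ε' / 2) := by
      rw [← Finset.sum_sub_distrib]
      calc ‖∑ i : Fin n, (F (eigs (A n + N n) i) - F (w n i))‖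
          ≤ ∑ i : Fin n, ‖F (eigs (A n + N n) i) - F (w n i)‖ := norm_sum_le _ _
        _ ≤ ∑ _i : Fin n, ε' / 2 := Finset.sum_le_sum fun i _ => hterm i
        _ = n * (ε' / 2) := by simp [Finset.sum_const, mul_comm]
    rw [norm_mul]
    have hninv : ‖(n : ℂ)⁻¹‖ = (n : ℝ)⁻¹ := by
      rw [norm_inv, Complex.norm_natCast]
    rw [hninv]
    calc (n : ℝ)⁻¹ * ‖∑ i, F (eigs (A n + N n) i) - ∑ i, F (w n i)‖
        ≤ (n : ℝ)⁻¹ * (n * (ε' / 2)) := by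
          apply mul_le_mul_of_nonneg_left hbound
          positivity
      _ = ε' / 2 := by
          rw [← mul_assoc, inv_mul_cancel₀ (Nat.cast_ne_zero.mpr (by omega)), one_mul]
      _ < ε' := by linarith
  have := hdiff.add hlimF
  rw [zero_add] at this
  convert this using 2 with n
  ring
end
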